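/- For every r₀ with 0 < r₀ < 1/2, the coordinate time needed by a radial photon to reach the singularity is finite and given exactly by ∫₀^{r₀} dr/(1 − √(2r)) = −√(2r₀) − ln(1 − √(2r₀)). In particular this quantity is finite and positive. -/

import Mathlib

open MeasureTheory intervalIntegral

/-- For `0 < r₀ < 1/2`, the coordinate time for a radial photon to reach the
KS naked singularity, `∫₀^{r₀} dr/(1 − √(2r))`, is finite and equals
`−√(2r₀) − ln(1 − √(2r₀))`, a positive quantity. -/
theorem ks_photon_time (r₀ : ℝ) (h0 : 0 < r₀) (h1 : r₀ < 1 / 2) :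
    IntervalIntegrable (fun r : ℝ => 1 / (1 - Real.sqrt (2 * r)))
      MeasureTheory.volume 0 r₀ ∧
    (∫ r in (0 : ℝ)..r₀, 1 / (1 - Real.sqrt (2 * r))) =
      -Real.sqrt (2 * r₀) - Real.log (1 - Real.sqrt (2 * r₀)) ∧
    0 < -Real.sqrt (2 * r₀) - Real.log (1 - Real.sqrt (2 * r₀)) := by
  have hlt : ∀ r ∈ Set.Icc (0:ℝ) r₀, Real.sqrt (2 * r) < 1 := by
    intro r hr
    have h2r : 2 * r < 1 := by nlinarith [hr.2]
    rw [show (1:ℝ) = Real.sqrt 1 by simp]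
    exact Real.sqrt_lt_sqrt (by nlinarith [hr.1]) (by linarith)
  have hne : ∀ r ∈ Set.Icc (0:ℝ) r₀, (1 - Real.sqrt (2 * r)) ≠ 0 := by
    intro r hr
    have := hlt r hr
    linarith
  have hIcc : Set.uIcc (0:ℝ) r₀ = Set.Icc 0 r₀ := Set.uIcc_of_le h0.le
  -- continuity of the integrand
  have hcont : ContinuousOn (fun r : ℝ => 1 / (1 - Real.sqrt (2 * r)))
      (Set.Icc 0 r₀) := by
    exact ContinuousOn.div continuousOn_const
      ((continuous_const.sub (Real.continuous_sqrt.comp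
        (continuous_const.mul continuous_id))).continuousOn) hne
  have hint : IntervalIntegrable (fun r : ℝ => 1 / (1 - Real.sqrt (2 * r)))
      MeasureTheory.volume 0 r₀ := by
    apply ContinuousOn.intervalIntegrable
    rwa [hIcc]
  refine ⟨hint, ?_, ?_⟩
  · -- FTC
    set F : ℝ → ℝ := fun r => -Real.sqrt (2 * r) - Real.log (1 - Real.sqrt (2 * r)) with hF
    have hFcont : ContinuousOn F (Set.Icc 0 r₀) := by
      apply ContinuousOn.sub
      · exact ((Real.continuous_sqrt.comp (continuous_const.mul continuous_id)).neg).continuousOn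
      · apply ContinuousOn.log
        · exact (continuous_const.sub (Real.continuous_sqrt.comp
          (continuous_const.mul continuous_id))).continuousOn
        · exact hne
    have hderiv : ∀ r ∈ Set.Ioo (0:ℝ) r₀,
        HasDerivAt F (1 / (1 - Real.sqrt (2 * r))) r := by
      intro r hr
      have hrpos : 0 < r := hr.1
      have hmem : r ∈ Set.Icc (0:ℝ) r₀ := ⟨hr.1.le, hr.2.le⟩
      have hspos : 0 < Real.sqrt (2 * r) := Real.sqrt_pos.mpr (by linarith)
      set s := Real.sqrt (2 * r) with hs
      have hs1 : s < 1 := hlt r hmem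
      have hsne : s ≠ 0 := ne_of_gt hspos
      have h1s : (1 : ℝ) - s ≠ 0 := by linarith
      -- derivative of sqrt(2r)
      have hsqrt : HasDerivAt (fun x : ℝ => Real.sqrt (2 * x)) (1 / s) r := by
        have h1 : HasDerivAt (fun x : ℝ => 2 * x) 2 r := by
          simpa using (hasDerivAt_id r).const_mul 2
        have h2 : HasDerivAt Real.sqrt (1 / (2 * Real.sqrt (2 * r))) (2 * r) :=
          Real.hasDerivAt_sqrt (by positivity)
        have := h2.comp r h1
        refine this.congr_deriv ?_
        rw [← hs]
        field_simp
      have hlog : HasDerivAt (fun x : ℝ => Real.log (1 - Real.sqrt (2 * x)))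
          ((1 / (1 - s)) * (-(1 / s))) r := by
        have hinner : HasDerivAt (fun x : ℝ => 1 - Real.sqrt (2 * x)) (-(1 / s)) r :=
          (hsqrt.const_sub 1)
        have := (Real.hasDerivAt_log h1s).comp r hinner
        refine this.congr_deriv ?_
        ring
      have := (hsqrt.neg).sub hlog
      refine this.congr_deriv ?_
      field_simp
      ring
    have := intervalIntegral.integral_eq_sub_of_hasDerivAt_of_le h0.le hFcont hderiv hint
    rw [this]
    simp [hF]
  · -- positivity
    have hmem : r₀ ∈ Set.Icc (0:ℝ) r₀ := ⟨h0.le, le_refl _⟩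
    have hs1 : Real.sqrt (2 * r₀) < 1 := hlt r₀ hmem
    have hspos : 0 < Real.sqrt (2 * r₀) := Real.sqrt_pos.mpr (by linarith)
    set s := Real.sqrt (2 * r₀)
    have hx : (0:ℝ) < 1 - s := by linarith
    have hx1 : (1:ℝ) - s ≠ 1 := by
      intro h; nlinarith
    have := Real.log_lt_sub_one_of_pos hx hx1
    linarith
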